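/- arXiv:math/0605007 — 3 statements merged into one kernel-verified Lean document; each statement's English description precedes it below -/
import Mathlib

section
/- Let (A_n)_{n≥1} be a sequence of events in a probability space such that P(A_n) → 0 as n → ∞. Suppose that for some fixed natural number m ≥ 0 the series ∑_{n=1}^∞ P(Ā_n ∩ Ā_{n+1} ∩ … ∩ Ā_{n+m-1} ∩ A_{n+m}) converges (where for m = 0 the summand is just P(A_n)). Then P(A_n infinitely often) = 0, i.e., the probability of the limsup of the events A_n is zero. -/
open MeasureTheory Filter

/-- Generalized Borel–Cantelli (Lemma 3): if `P(A n) → 0` and for some `m ≥ 0`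
the series `∑ₙ P(Ā_n ∩ ⋯ ∩ Ā_{n+m-1} ∩ A_{n+m})` converges, then `P(A_n i.o.) = 0`. -/
theorem borel_cantelli_generalized
    {Ω : Type*} [MeasurableSpace Ω] (μ : Measure Ω) [IsProbabilityMeasure μ]
    (A : ℕ → Set Ω) (hA : ∀ n, MeasurableSet (A n))
    (h0 : Tendsto (fun n => μ (A n)) atTop (nhds 0))
    (m : ℕ)
    (hsum : ∑' n, μ ((⋂ i ∈ Finset.range m, (A (n + i))ᶜ) ∩ A (n + m)) ≠ ⊤) :
    μ (Filter.limsup A Filter.atTop) = 0 := by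
  classical
  set B : ℕ → Set Ω := fun n => (⋂ i ∈ Finset.range m, (A (n + i))ᶜ) ∩ A (n + m) with hB
  -- set inclusion for each N
  have hincl : ∀ N : ℕ, Filter.limsup A Filter.atTop ⊆
      (⋃ i ∈ Finset.range m, A (N + i)) ∪ ⋃ n, B (N + n) := by
    intro N ω hω
    have hfreq : ∃ᶠ k in atTop, ω ∈ A k := Filter.mem_limsup_iff_frequently_mem.1 hω
    have hex : ∃ k, N ≤ k ∧ ω ∈ A k := by
      obtain ⟨k, hk, hωk⟩ := (Filter.frequently_atTop.1 hfreq) N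
      exact ⟨k, hk, hωk⟩
    set k0 := Nat.find hex with hk0
    obtain ⟨hk0N, hk0A⟩ := Nat.find_spec hex
    by_cases hcase : k0 < N + m
    · left
      have h1 : k0 - N < m := by omega
      have h2 : ω ∈ A (N + (k0 - N)) := by rwa [Nat.add_sub_cancel' hk0N]
      exact Set.mem_biUnion (Finset.mem_range.2 h1) h2
    · right
      push_neg at hcase
      refine Set.mem_iUnion.2 ⟨k0 - m - N, ?_⟩
      have hNn : N + (k0 - m - N) = k0 - m := by omega
      rw [hNn]
      constructor
      · refine Set.mem_iInter₂.2 fun i hi => ?_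
        have him : i < m := Finset.mem_range.1 hi
        intro hmem
        have hlt : k0 - m + i < k0 := by omega
        have hge : N ≤ k0 - m + i := by omega
        exact absurd ⟨hge, hmem⟩ (Nat.find_min hex hlt)
      · have : k0 - m + m = k0 := by omega
        rw [this]; exact hk0A
  -- measure bound
  have hbound : ∀ N : ℕ, μ (Filter.limsup A Filter.atTop) ≤
      (∑ i ∈ Finset.range m, μ (A (N + i))) + ∑' n, μ (B (N + n)) := by
    intro N
    calc μ (Filter.limsup A Filter.atTop)
        ≤ μ ((⋃ i ∈ Finset.range m, A (N + i)) ∪ ⋃ n, B (N + n)) :=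
          measure_mono (hincl N)
      _ ≤ μ (⋃ i ∈ Finset.range m, A (N + i)) + μ (⋃ n, B (N + n)) := measure_union_le _ _
      _ ≤ (∑ i ∈ Finset.range m, μ (A (N + i))) + ∑' n, μ (B (N + n)) := by
          gcongr
          · exact measure_biUnion_finset_le _ _
          · exact measure_iUnion_le _
  -- the bound tends to 0
  have h1 : Tendsto (fun N => ∑ i ∈ Finset.range m, μ (A (N + i))) atTop (nhds 0) := by
    have : Tendsto (fun N => ∑ i ∈ Finset.range m, μ (A (N + i))) atTop
        (nhds (∑ i ∈ Finset.range m, (0 : ENNReal))) := by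
      refine tendsto_finset_sum _ fun i _ => ?_
      exact h0.comp (Filter.tendsto_add_atTop_nat i)
    simpa using this
  have h2 : Tendsto (fun N => ∑' n, μ (B (N + n))) atTop (nhds 0) := by
    have := ENNReal.tendsto_sum_nat_add (fun n => μ (B n)) hsum
    refine this.congr fun N => ?_
    exact tsum_congr fun n => by rw [add_comm]
  have htend : Tendsto (fun N => (∑ i ∈ Finset.range m, μ (A (N + i))) + ∑' n, μ (B (N + n)))
      atTop (nhds 0) := by
    simpa using h1.add h2
  have := ge_of_tendsto' htend hbound
  simpa using le_antisymm this zero_le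
end

section
/- Let (A_n)_{n≥1} be a sequence of events in a probability space such that P(A_n) → 0 as n → ∞ and ∑_{n=1}^∞ P(Ā_n ∩ A_{n+1}) < ∞. Then P(A_n infinitely often) = 0. -/
open MeasureTheory Filter

/-- Barndorff-Nielsen's lemma: if `P(A n) → 0` and `∑ₙ P(Ā_n ∩ A_{n+1}) < ∞`,
then `P(A_n i.o.) = 0`. -/
theorem barndorff_nielsen
    {Ω : Type*} [MeasurableSpace Ω] (μ : Measure Ω) [IsProbabilityMeasure μ]
    (A : ℕ → Set Ω) (hA : ∀ n, MeasurableSet (A n))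
    (h0 : Tendsto (fun n => μ (A n)) atTop (nhds 0))
    (hsum : ∑' n, μ ((A n)ᶜ ∩ A (n + 1)) ≠ ⊤) :
    μ (Filter.limsup A Filter.atTop) = 0 := by
  set g : ℕ → ENNReal := fun k => μ ((A k)ᶜ ∩ A (k + 1)) with hg
  have key : ∀ N, μ (limsup A atTop) ≤ μ (A N) + ∑' k, g (k + N) := by
    intro N
    have step : ∀ n, N ≤ n → A n ⊆ A N ∪ ⋃ k, ((A (k + N))ᶜ ∩ A (k + N + 1)) := by
      intro n
      induction n with
      | zero =>
        intro hN
        have : N = 0 := Nat.le_zero.mp hN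
        subst this
        exact Set.subset_union_left
      | succ m ih =>
        intro hN ω hω
        rcases Nat.lt_or_ge N (m + 1) with hlt | hge
        · have hNm : N ≤ m := Nat.lt_succ_iff.mp hlt
          by_cases hm : ω ∈ A m
          · exact ih hNm hm
          · right
            refine Set.mem_iUnion.mpr ⟨m - N, ?_⟩
            have : m - N + N = m := Nat.sub_add_cancel hNm
            rw [this]
            exact ⟨hm, hω⟩
        · have : N = m + 1 := le_antisymm (Nat.le_of_lt_succ (Nat.lt_succ_of_le hN)) hge
          subst this
          exact Or.inl hω
    have hsub : limsup A atTop ⊆ A N ∪ ⋃ k, ((A (k + N))ᶜ ∩ A (k + N + 1)) := by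
      intro ω hω
      have hfreq : ∃ᶠ n in atTop, ω ∈ A n := Filter.mem_limsup_iff_frequently_mem.mp hω
      obtain ⟨n, hmem, hge⟩ := (hfreq.and_eventually (Filter.eventually_ge_atTop N)).exists
      exact step n hge hmem
    calc μ (limsup A atTop) ≤ μ (A N ∪ ⋃ k, ((A (k + N))ᶜ ∩ A (k + N + 1))) :=
          measure_mono hsub
      _ ≤ μ (A N) + μ (⋃ k, ((A (k + N))ᶜ ∩ A (k + N + 1))) := measure_union_le _ _
      _ ≤ μ (A N) + ∑' k, g (k + N) := by
          gcongr
          exact measure_iUnion_le _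
  have htail : Tendsto (fun N => μ (A N) + ∑' k, g (k + N)) atTop (nhds 0) := by
    have h1 := ENNReal.tendsto_sum_nat_add g hsum
    simpa using h0.add h1
  have hle : μ (limsup A atTop) ≤ 0 := ge_of_tendsto htail (Filter.Eventually.of_forall key)
  exact le_antisymm hle zero_le
end

section
/- Let (A_n)_{n≥1} be a sequence of events in a probability space such that P(A_n) → 0 as n → ∞ and ∑_{n=1}^∞ P(A_n ∩ Ā_{n+1}) < ∞. Then P(A_n infinitely often) = 0. -/
open MeasureTheory Filter

/-- Variant of Barndorff-Nielsen's lemma: if `P(A n) → 0` and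
`∑ₙ P(A_n ∩ Ā_{n+1}) < ∞`, then `P(A_n i.o.) = 0`. -/
theorem barndorff_nielsen_variant
    {Ω : Type*} [MeasurableSpace Ω] (μ : Measure Ω) [IsProbabilityMeasure μ]
    (A : ℕ → Set Ω) (hA : ∀ n, MeasurableSet (A n))
    (h0 : Tendsto (fun n => μ (A n)) atTop (nhds 0))
    (hsum : ∑' n, μ (A n ∩ (A (n + 1))ᶜ) ≠ ⊤) :
    μ (Filter.limsup A Filter.atTop) = 0 := by
  set B : ℕ → Set Ω := fun n => A n ∩ (A (n + 1))ᶜ with hB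
  have hBC : μ (Filter.limsup B Filter.atTop) = 0 :=
    measure_limsup_atTop_eq_zero hsum
  have hliminf : μ (Filter.liminf A Filter.atTop) = 0 := by
    rw [Filter.liminf_eq_iSup_iInf_of_nat]
    refine measure_iUnion_null fun n => ?_
    have hC : ∀ m, n ≤ m → μ (⋂ k ∈ {i | n ≤ i}, A k) ≤ μ (A m) := by
      intro m hm
      exact measure_mono (Set.biInter_subset_of_mem hm)
    have : μ (⋂ k ∈ {i | n ≤ i}, A k) ≤ 0 := by
      refine ge_of_tendsto h0 ?_
      filter_upwards [Filter.eventually_ge_atTop n] with m hm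
      exact hC m hm
    exact (by simpa only [Set.mem_setOf_eq, ge_iff_le, le_zero_iff] using this : μ (⋂ k, ⋂ (_ : n ≤ k), A k) = 0)
  have hsub : Filter.limsup A Filter.atTop ⊆
      Filter.limsup B Filter.atTop ∪ Filter.liminf A Filter.atTop := by
    intro x hx
    by_cases hxB : x ∈ Filter.limsup B Filter.atTop
    · exact Or.inl hxB
    · right
      rw [Filter.mem_limsup_iff_frequently_mem] at hx hxB
      rw [Filter.not_frequently] at hxB
      rw [Filter.mem_liminf_iff_eventually_mem]
      rw [Filter.eventually_atTop] at hxB ⊢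
      obtain ⟨N, hN⟩ := hxB
      rw [Filter.frequently_atTop] at hx
      obtain ⟨M, hM, hMA⟩ := hx N
      refine ⟨M, fun m hm => ?_⟩
      induction m with
      | zero => exact Nat.le_zero.mp hm ▸ hMA
      | succ k ih =>
        rcases Nat.lt_or_ge M (k+1) with h | h
        · have hk : x ∈ A k := ih (by omega)
          have := hN k (by omega)
          simp only [hB, Set.mem_inter_iff, Set.mem_compl_iff, not_and, not_not] at this
          exact this hk
        · have : M = k + 1 := le_antisymm hm h
          exact this ▸ hMA
  rw [← le_zero_iff]
  calc μ (Filter.limsup A Filter.atTop)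
      ≤ μ (Filter.limsup B Filter.atTop ∪ Filter.liminf A Filter.atTop) := measure_mono hsub
    _ ≤ μ (Filter.limsup B Filter.atTop) + μ (Filter.liminf A Filter.atTop) := measure_union_le _ _
    _ = 0 := by rw [hBC, hliminf, add_zero]
end
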